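/- For every integer n ≥ 2, if X ∈ so(2n, ℂ) commutes with the block matrix fromBlocks Y 0 0 0 (the 2n×2n matrix with upper-left (2n−1)×(2n−1) block Y and zeros elsewhere) for every Y ∈ so(2n−1, ℂ), then X = 0. In other words, the centralizer of the standardly embedded so(2n−1, ℂ) in so(2n, ℂ) is trivial. -/

import Mathlib

attribute [local instance 100] LieRing.ofAssociativeRing

/-- The orthogonal Lie algebra `so(ℂ)` over an arbitrary finite index type:
skew-symmetric complex matrices (`Xᵀ = -X`). -/
def so' (ι : Type) [Fintype ι] [DecidableEq ι] : LieSubalgebra ℂ (Matrix ι ι ℂ) :=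
  skewAdjointMatricesLieSubalgebra (1 : Matrix ι ι ℂ)

/-- The orthogonal Lie algebra `so(m, ℂ)` of skew-symmetric `m × m` complex matrices
(`Xᵀ = -X`), a Lie subalgebra of `gl(m, ℂ)`. -/
def so (m : ℕ) : LieSubalgebra ℂ (Matrix (Fin m) (Fin m) ℂ) :=
  skewAdjointMatricesLieSubalgebra (1 : Matrix (Fin m) (Fin m) ℂ)

/-- For every `n ≥ 2`, if `X ∈ so(2n, ℂ)` commutes with `fromBlocks Y 0 0 0` for every
`Y ∈ so(2n - 1, ℂ)`, then `X = 0`: the centralizer of the standardly embedded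
`so(2n - 1, ℂ)` in `so(2n, ℂ)` is trivial. -/
theorem centralizer_so_in_so_trivial (n : ℕ) (hn : 2 ≤ n)
    (X : Matrix (Fin (2 * n - 1) ⊕ Fin 1) (Fin (2 * n - 1) ⊕ Fin 1) ℂ)
    (hX : X ∈ so' (Fin (2 * n - 1) ⊕ Fin 1))
    (hcomm : ∀ Y ∈ so (2 * n - 1),
      X * Matrix.fromBlocks Y 0 0 0 = Matrix.fromBlocks Y 0 0 0 * X) : X = 0 := by
  classical
  have hm : 3 ≤ 2 * n - 1 := by omega
  -- skewness of X
  rw [so', mem_skewAdjointMatricesLieSubalgebra, mem_skewAdjointMatricesSubmodule] at hX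
  have hskew : Matrix.transpose X = -X := by
    simpa [Matrix.IsSkewAdjoint, Matrix.IsAdjointPair] using hX
  have hs : ∀ p q, X q p = -X p q := fun p q => by
    have := congrFun (congrFun hskew p) q
    simpa [Matrix.transpose_apply] using this
  -- the elementary skew matrices lie in so
  have hY : ∀ i j : Fin (2 * n - 1),
      (Matrix.single i j (1 : ℂ) - Matrix.single j i 1) ∈ so (2 * n - 1) := by
    intro i j
    rw [so, mem_skewAdjointMatricesLieSubalgebra, mem_skewAdjointMatricesSubmodule]
    show Matrix.IsAdjointPair _ _ _ _
    unfold Matrix.IsAdjointPair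
    rw [Matrix.mul_one, Matrix.one_mul]
    ext a b
    simp [Matrix.single, and_comm]
  -- blocks of X
  set A := X.toBlocks₁₁ with hA
  set B := X.toBlocks₁₂ with hB
  set C := X.toBlocks₂₁ with hC
  set D := X.toBlocks₂₂ with hD
  have hXb : X = Matrix.fromBlocks A B C D := (Matrix.fromBlocks_toBlocks X).symm
  -- block equations from the commuting hypothesis
  have hblocks : ∀ i j : Fin (2 * n - 1),
      (A * (Matrix.single i j (1 : ℂ) - Matrix.single j i 1)
        = (Matrix.single i j (1 : ℂ) - Matrix.single j i 1) * A)
      ∧ ((Matrix.single i j (1 : ℂ) - Matrix.single j i 1) * B = 0) := by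
    intro i j
    have h := hcomm _ (hY i j)
    rw [hXb, Matrix.fromBlocks_multiply, Matrix.fromBlocks_multiply] at h
    constructor
    · have := congrArg Matrix.toBlocks₁₁ h
      simpa using this
    · have := congrArg Matrix.toBlocks₁₂ h
      symm
      simpa using this
  -- pick an element distinct from two given ones
  have hpick : ∀ i k : Fin (2 * n - 1), ∃ j : Fin (2 * n - 1), j ≠ i ∧ j ≠ k := by
    intro i k
    by_contra h
    push_neg at h
    have hsub : (Finset.univ : Finset (Fin (2 * n - 1))) ⊆ {i, k} := by
      intro x _
      by_cases hx : x = i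
      · simp [hx]
      · simp [h x hx]
    have hle := Finset.card_le_card hsub
    have hcard : ({i, k} : Finset (Fin (2 * n - 1))).card ≤ 2 := by
      apply le_trans (Finset.card_insert_le _ _)
      simp
    simp [Finset.card_univ] at hle
    omega
  -- B = 0
  have hB0 : B = 0 := by
    ext j c
    obtain ⟨i, hij, -⟩ := hpick j j
    have h := (hblocks i j).2
    have he := congrFun (congrFun h i) c
    rw [Matrix.sub_mul] at he
    simp [Matrix.mul_apply, Matrix.single, hij, Ne.symm hij] at he
    simpa using he
  -- A = 0
  have hA0 : A = 0 := by
    ext k i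
    by_cases hki : k = i
    · subst hki
      have hAkk : A k k = -A k k := hs (Sum.inl k) (Sum.inl k)
      simpa using self_eq_neg.mp hAkk
    · obtain ⟨j, hji, hjk⟩ := hpick i k
      have h := (hblocks i j).1
      have he := congrFun (congrFun h k) j
      rw [Matrix.mul_sub, Matrix.sub_mul] at he
      simp [hji, hki, Ne.symm hjk] at he
      simpa using he
  -- C = 0 and D = 0 via skewness
  have hC0 : C = 0 := by
    ext q a
    have hCq : C q a = -B a q := hs (Sum.inl a) (Sum.inr q)
    rw [hCq, hB0]
    simp
  have hD0 : D = 0 := by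
    ext q r
    have hqr : q = r := Subsingleton.elim q r
    subst hqr
    have hDqq : D q q = -D q q := hs (Sum.inr q) (Sum.inr q)
    simpa using self_eq_neg.mp hDqq
  rw [hXb, hA0, hB0, hC0, hD0, Matrix.fromBlocks_zero]
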